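/- Let G be a finite simple graph with no quadrangle (no cycle of length 4), minimum degree δ and maximum degree Δ. If δ ≥ 2√Δ + 2, then G is completely hyperenergetic: E_G(v) ≥ 2 for every vertex v of G. -/

import Mathlib

open Matrix Finset

/-- The energy of the vertex `i` of a finite simple graph `G`:
the `(i,i)` entry of `|A| = (A Aᴴ)^{1/2}`, where `A` is the adjacency matrix. -/
noncomputable def vertexEnergy {n : ℕ} (G : SimpleGraph (Fin n)) [DecidableRel G.Adj]
    (i : Fin n) : ℝ :=
  (let hA := Matrix.posSemidef_self_mul_conjTranspose (G.adjMatrix ℝ)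
   (hA.1.eigenvectorUnitary.1 * diagonal ((RCLike.ofReal : ℝ → ℝ) ∘ (√·) ∘ hA.1.eigenvalues) *
    (star hA.1.eigenvectorUnitary : Matrix (Fin n) (Fin n) ℝ))) i i

/-- The square root of a PSD matrix, in the same form as in `vertexEnergy`. -/
noncomputable def psdSqrt {m : ℕ} {M : Matrix (Fin m) (Fin m) ℝ} (hM : M.PosSemidef) :
    Matrix (Fin m) (Fin m) ℝ :=
  hM.1.eigenvectorUnitary.1 * diagonal ((RCLike.ofReal : ℝ → ℝ) ∘ (√·) ∘ hM.1.eigenvalues) *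
    (star hM.1.eigenvectorUnitary : Matrix (Fin m) (Fin m) ℝ)

lemma psdSqrt_eq_cfc {m : ℕ} {M : Matrix (Fin m) (Fin m) ℝ} (hM : M.PosSemidef) :
    psdSqrt hM = cfc Real.sqrt M := by
  rw [hM.1.cfc_eq, IsHermitian.cfc, Unitary.conjStarAlgAut_apply]
  rfl

lemma psdSqrt_mul_self {m : ℕ} {M : Matrix (Fin m) (Fin m) ℝ} (hM : M.PosSemidef) :
    psdSqrt hM * psdSqrt hM = M := by
  rw [psdSqrt_eq_cfc, ← cfc_mul Real.sqrt Real.sqrt M]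
  conv_rhs => rw [← cfc_id' ℝ M hM.1.isSelfAdjoint]
  refine cfc_congr fun x hx => ?_
  rw [hM.1.spectrum_real_eq_range_eigenvalues] at hx
  obtain ⟨i, rfl⟩ := hx
  exact Real.mul_self_sqrt (hM.eigenvalues_nonneg i)

lemma psdSqrt_posSemidef {m : ℕ} {M : Matrix (Fin m) (Fin m) ℝ} (hM : M.PosSemidef) :
    (psdSqrt hM).PosSemidef := by
  have hD : (diagonal ((RCLike.ofReal : ℝ → ℝ) ∘ (√·) ∘ hM.1.eigenvalues)).PosSemidef :=
    PosSemidef.diagonal fun i => Real.sqrt_nonneg _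
  have := hD.mul_mul_conjTranspose_same (hM.1.eigenvectorUnitary.1)
  rw [psdSqrt]
  convert this using 1
  rw [star_eq_conjTranspose]

lemma psd_dot_symm {m : ℕ} {R : Matrix (Fin m) (Fin m) ℝ} (hR : Rᵀ = R)
    (u z : Fin m → ℝ) : (R *ᵥ u) ⬝ᵥ z = u ⬝ᵥ (R *ᵥ z) := by
  rw [dotProduct_comm, dotProduct_mulVec, ← mulVec_transpose, hR, dotProduct_comm,
    dotProduct_comm u]

lemma psd_cauchy {m : ℕ} {M : Matrix (Fin m) (Fin m) ℝ} (hM : M.PosSemidef)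
    (x y : Fin m → ℝ) : (x ⬝ᵥ M *ᵥ y)^2 ≤ (x ⬝ᵥ M *ᵥ x) * (y ⬝ᵥ M *ᵥ y) := by
  set R := psdSqrt hM with hRdef
  have hRR : R * R = M := psdSqrt_mul_self hM
  have hRsym : Rᵀ = R := by
    have h := (psdSqrt_posSemidef hM).1
    rw [IsHermitian, conjTranspose] at h
    ext i j; simpa using congrFun (congrFun h i) j
  have key : ∀ u w : Fin m → ℝ, u ⬝ᵥ M *ᵥ w = (R *ᵥ u) ⬝ᵥ (R *ᵥ w) := by
    intro u w
    rw [psd_dot_symm hRsym, mulVec_mulVec, hRR]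
  rw [key x y, key x x, key y y]
  have := Finset.sum_mul_sq_le_sq_mul_sq Finset.univ (R *ᵥ x) (R *ᵥ y)
  simpa [dotProduct, pow_two] using this

lemma psd_diag_nonneg {m : ℕ} {M : Matrix (Fin m) (Fin m) ℝ} (hM : M.PosSemidef)
    (v : Fin m) : 0 ≤ M v v := by
  have h := hM.dotProduct_mulVec_nonneg (Pi.single v 1)
  rw [star_trivial] at h
  have he : (Pi.single v 1 : Fin m → ℝ) ⬝ᵥ M *ᵥ (Pi.single v 1) = M v v := by
    simp [dotProduct, mulVec, Pi.single_apply, mul_ite, ite_mul]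
  rwa [he] at h

/-- Key spectral inequality: for a PSD matrix `S`,
`((S²)_{vv})³ ≤ (S_{vv})² · ((S⁴)_{vv})`. -/
lemma spectral_ineq {m : ℕ} {S : Matrix (Fin m) (Fin m) ℝ} (hS : S.PosSemidef)
    (v : Fin m) :
    ((S * S) v v) ^ 3 ≤ (S v v) ^ 2 * (((S * S) * (S * S)) v v) := by
  have hSsym : Sᵀ = S := by
    have h := hS.1
    rw [IsHermitian, conjTranspose] at h
    ext i j; simpa using congrFun (congrFun h i) j
  have hSS : (S * S).PosSemidef := by
    have h := Matrix.posSemidef_self_mul_conjTranspose S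
    rwa [hS.1] at h
  have hSSSS : ((S * S) * (S * S)).PosSemidef := by
    have h := Matrix.posSemidef_self_mul_conjTranspose (S * S)
    rwa [hSS.1] at h
  set e : Fin m → ℝ := Pi.single v 1 with hedef
  have hdiag : ∀ M : Matrix (Fin m) (Fin m) ℝ, e ⬝ᵥ M *ᵥ e = M v v := by
    intro M
    simp [hedef, dotProduct, mulVec, Pi.single_apply, mul_ite, ite_mul]
  have hCS1 : ((S * S) v v) ^ 2 ≤ (S v v) * ((S * (S * S)) v v) := by
    have h := psd_cauchy hS e (S *ᵥ e)
    rw [psd_dot_symm hSsym] at h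
    simp only [mulVec_mulVec] at h
    simp only [hdiag] at h
    convert h using 3 <;> simp only [mul_assoc]
  have hCS2 : ((S * (S * S)) v v) ^ 2 ≤ ((S * S) v v) * (((S * S) * (S * S)) v v) := by
    have h := psd_cauchy hSS e (S *ᵥ e)
    rw [psd_dot_symm hSsym] at h
    simp only [mulVec_mulVec] at h
    simp only [hdiag] at h
    have e1 : S * S * S = S * (S * S) := mul_assoc S S S
    have e2 : S * (S * (S * S)) = S * S * (S * S) := by simp only [← mul_assoc]
    rw [e1, e2] at h
    exact h
  have hb0 : 0 ≤ (S * S) v v := psd_diag_nonneg hSS v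
  have hd0 : 0 ≤ ((S * S) * (S * S)) v v := psd_diag_nonneg hSSSS v
  have ha0 : 0 ≤ S v v := psd_diag_nonneg hS v
  rcases eq_or_lt_of_le hb0 with hb | hb
  · rw [← hb]
    have := mul_nonneg (sq_nonneg (S v v)) hd0
    nlinarith
  · nlinarith [hCS1, hCS2, sq_nonneg (S v v), sq_nonneg ((S * (S * S)) v v), hb, hd0, ha0]

theorem stmt_12 {n : ℕ} (G : SimpleGraph (Fin n)) [DecidableRel G.Adj]
    (hquad : ∀ a b c e : Fin n,
      G.Adj a b → G.Adj b c → G.Adj c e → G.Adj e a → a = c ∨ b = e)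
    (hdeg : 2 * Real.sqrt (G.maxDegree) + 2 ≤ (G.minDegree : ℝ)) :
    ∀ v : Fin n, 2 ≤ vertexEnergy G v := by
  intro v
  have hne : Nonempty (Fin n) := ⟨v⟩
  show 2 ≤ psdSqrt (Matrix.posSemidef_self_mul_conjTranspose (G.adjMatrix ℝ)) v v
  have hP := Matrix.posSemidef_self_mul_conjTranspose (G.adjMatrix ℝ)
  have hAH : (G.adjMatrix ℝ)ᴴ = G.adjMatrix ℝ := by
    ext i j
    simp [Matrix.conjTranspose_apply, G.adj_comm i j]
  have hsq : psdSqrt hP * psdSqrt hP = G.adjMatrix ℝ * G.adjMatrix ℝ := by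
    rw [psdSqrt_mul_self hP, hAH]
  have key := spectral_ineq (psdSqrt_posSemidef hP) v
  rw [hsq] at key
  set a : ℝ := psdSqrt hP v v with hadef
  set b : ℝ := (G.degree v : ℝ) with hbdef
  have hbB : (G.adjMatrix ℝ * G.adjMatrix ℝ) v v = b := by
    rw [SimpleGraph.adjMatrix_mul_self_apply_self]
  rw [hbB] at key
  set d : ℝ := ((G.adjMatrix ℝ * G.adjMatrix ℝ) * (G.adjMatrix ℝ * G.adjMatrix ℝ)) v v
    with hddef
  -- combinatorial bounds on B := A * A
  have hcount : ∀ j, (G.adjMatrix ℝ * G.adjMatrix ℝ) v j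
      = ((univ.filter (fun u => G.Adj v u ∧ G.Adj u j)).card : ℝ) := by
    intro j
    rw [Matrix.mul_apply, Finset.card_filter]
    push_cast
    refine Finset.sum_congr rfl fun u _ => ?_
    by_cases h1 : G.Adj v u <;> by_cases h2 : G.Adj u j <;> simp [h1, h2]
  have hBnn : ∀ j, 0 ≤ (G.adjMatrix ℝ * G.adjMatrix ℝ) v j := by
    intro j
    rw [hcount]
    positivity
  have hBle : ∀ j, j ≠ v → (G.adjMatrix ℝ * G.adjMatrix ℝ) v j ≤ 1 := by
    intro j hj
    rw [hcount]
    have hcard : (univ.filter (fun u => G.Adj v u ∧ G.Adj u j)).card ≤ 1 := by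
      refine Finset.card_le_one.mpr fun x hx y hy => ?_
      simp only [Finset.mem_filter] at hx hy
      rcases hquad v x j y hx.2.1 hx.2.2 (hy.2.2.symm) (hy.2.1.symm) with h | h
      · exact absurd h.symm hj
      · exact h
    exact_mod_cast hcard
  have hBsym : ∀ j, (G.adjMatrix ℝ * G.adjMatrix ℝ) j v
      = (G.adjMatrix ℝ * G.adjMatrix ℝ) v j := by
    intro j
    have ht : (G.adjMatrix ℝ * G.adjMatrix ℝ)ᵀ = G.adjMatrix ℝ * G.adjMatrix ℝ := by
      rw [Matrix.transpose_mul, SimpleGraph.transpose_adjMatrix]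
    conv_lhs => rw [← ht]
    exact Matrix.transpose_apply _ j v
  have hmaxd : ∀ u : Fin n, (G.degree u : ℝ) ≤ (G.maxDegree : ℝ) := fun u => by
    exact_mod_cast G.degree_le_maxDegree u
  have hrow : ∑ j, (G.adjMatrix ℝ * G.adjMatrix ℝ) v j ≤ b * (G.maxDegree : ℝ) := by
    have h1 : ∑ j, (G.adjMatrix ℝ * G.adjMatrix ℝ) v j
        = ((G.adjMatrix ℝ * G.adjMatrix ℝ) *ᵥ Function.const _ 1) v := by
      simp [mulVec, dotProduct]
    have h2 : ((G.adjMatrix ℝ * G.adjMatrix ℝ) *ᵥ Function.const _ 1) v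
        = ∑ u ∈ G.neighborFinset v, (G.degree u : ℝ) := by
      rw [← mulVec_mulVec, SimpleGraph.adjMatrix_mulVec_apply]
      refine Finset.sum_congr rfl fun u _ => ?_
      rw [SimpleGraph.adjMatrix_mulVec_const_apply, mul_one]
    rw [h1, h2]
    calc ∑ u ∈ G.neighborFinset v, (G.degree u : ℝ)
        ≤ ∑ _u ∈ G.neighborFinset v, (G.maxDegree : ℝ) :=
          Finset.sum_le_sum fun u _ => hmaxd u
      _ = ((G.neighborFinset v).card : ℝ) * (G.maxDegree : ℝ) := by
          rw [Finset.sum_const, nsmul_eq_mul]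
      _ = b * (G.maxDegree : ℝ) := by
          rw [G.card_neighborFinset_eq_degree v]
  have hdsum : d = ∑ j, (G.adjMatrix ℝ * G.adjMatrix ℝ) v j
      * (G.adjMatrix ℝ * G.adjMatrix ℝ) v j := by
    rw [hddef, Matrix.mul_apply]
    exact Finset.sum_congr rfl fun j _ => by rw [hBsym j]
  have hdle : d ≤ b ^ 2 + b * (G.maxDegree : ℝ) - b := by
    rw [hdsum]
    have hsplit := (Finset.add_sum_erase univ
      (fun j => (G.adjMatrix ℝ * G.adjMatrix ℝ) v j
        * (G.adjMatrix ℝ * G.adjMatrix ℝ) v j) (Finset.mem_univ v)).symm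
    rw [hsplit, hbB]
    have h1 : ∑ j ∈ univ.erase v, (G.adjMatrix ℝ * G.adjMatrix ℝ) v j
          * (G.adjMatrix ℝ * G.adjMatrix ℝ) v j
        ≤ ∑ j ∈ univ.erase v, (G.adjMatrix ℝ * G.adjMatrix ℝ) v j := by
      refine Finset.sum_le_sum fun j hj => ?_
      have hj' : j ≠ v := Finset.ne_of_mem_erase hj
      nlinarith [hBnn j, hBle j hj']
    have h2 : ∑ j ∈ univ.erase v, (G.adjMatrix ℝ * G.adjMatrix ℝ) v j
        = (∑ j, (G.adjMatrix ℝ * G.adjMatrix ℝ) v j)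
          - (G.adjMatrix ℝ * G.adjMatrix ℝ) v v :=
      Finset.sum_erase_eq_sub (Finset.mem_univ v)
    rw [h2, hbB] at h1
    nlinarith [hrow]
  -- numeric endgame
  have hs0 : 0 ≤ Real.sqrt (G.maxDegree : ℝ) := Real.sqrt_nonneg _
  have hs2 : Real.sqrt (G.maxDegree : ℝ) ^ 2 = (G.maxDegree : ℝ) :=
    Real.sq_sqrt (by positivity)
  have hdv : 2 * Real.sqrt (G.maxDegree : ℝ) + 2 ≤ b := by
    rw [hbdef]
    exact le_trans hdeg (by exact_mod_cast G.minDegree_le_degree v)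
  have hbpos : 0 < b := by nlinarith
  have hkey : 4 * (b ^ 2 + b * (G.maxDegree : ℝ) - b) ≤ b ^ 3 := by
    nlinarith [mul_nonneg hbpos.le (mul_nonneg (sub_nonneg.mpr hdv)
      (by nlinarith : (0:ℝ) ≤ b + 2 * Real.sqrt (G.maxDegree : ℝ) - 2))]
  have ha0 : 0 ≤ a := psd_diag_nonneg (psdSqrt_posSemidef hP) v
  have hdpos : 0 < d := by nlinarith [key, hbpos, sq_nonneg a]
  have h4d : 4 * d ≤ a ^ 2 * d := by nlinarith [key, hdle, hkey]
  have ha2 : (4:ℝ) ≤ a ^ 2 := by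
    have := (mul_le_mul_iff_of_pos_right hdpos).mp h4d
    linarith
  nlinarith [ha2, ha0]
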